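/- Let A be an n×n invertible symmetric real matrix, J a p×p symmetric real matrix with J·J = I_p, and ρ > 0. For any n×p real matrix X such that XᵀX and XᵀAX are invertible, the matrix G¹_X := ρ⁻¹·A X Xᵀ A + (A − A X J Xᵀ A)·(A − A X J Xᵀ A) is symmetric positive definite. -/

import Mathlib

open Matrix

/-- For `X ∈ E` (i.e. `XᵀX` and `XᵀAX` invertible), the metric matrix
`G¹_X = ρ⁻¹·AXXᵀA + (A − AXJXᵀA)²` is symmetric positive definite. -/
theorem G1_posDef
    (n p : ℕ) (hpn : p ≤ n)
    (A : Matrix (Fin n) (Fin n) ℝ) (hA : Aᵀ = A) (hAinv : IsUnit A)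
    (J : Matrix (Fin p) (Fin p) ℝ) (hJ : Jᵀ = J) (hJ2 : J * J = 1)
    (ρ : ℝ) (hρ : 0 < ρ)
    (X : Matrix (Fin n) (Fin p) ℝ)
    (hX1 : IsUnit (Xᵀ * X)) (hX2 : IsUnit (Xᵀ * A * X)) :
    (ρ⁻¹ • (A * X * Xᵀ * A) +
      (A - A * X * J * Xᵀ * A) * (A - A * X * J * Xᵀ * A)).PosDef := by
  set B : Matrix (Fin n) (Fin n) ℝ := A - A * X * J * Xᵀ * A with hB
  have hBsym : Bᵀ = B := by
    simp [hB, transpose_sub, transpose_mul, hA, hJ, Matrix.mul_assoc]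
  have hfact : A * X * Xᵀ * A = (Xᵀ * A)ᵀ * (Xᵀ * A) := by
    simp [transpose_mul, hA, Matrix.mul_assoc]
  have hBB : B * B = Bᵀ * B := by rw [hBsym]
  rw [posDef_iff_dotProduct_mulVec]
  constructor
  · -- Hermitian
    have : (ρ⁻¹ • (A * X * Xᵀ * A) + B * B)ᵀ = ρ⁻¹ • (A * X * Xᵀ * A) + B * B := by
      rw [hfact, hBB]
      simp [transpose_add, transpose_smul, transpose_mul, Matrix.mul_assoc]
    simpa [Matrix.IsHermitian, conjTranspose_eq_transpose_of_trivial] using this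
  · intro x hx
    have key : ∀ y : Fin n → ℝ, (Xᵀ * A) *ᵥ y = 0 → B *ᵥ y = 0 → y = 0 := by
      intro y h1 h2
      have hAy : A *ᵥ y = 0 := by
        have : B *ᵥ y = A *ᵥ y - (A * X * J) *ᵥ ((Xᵀ * A) *ᵥ y) := by
          rw [hB, Matrix.sub_mulVec, Matrix.mulVec_mulVec]
          ring_nf
          rw [Matrix.mul_assoc, Matrix.mul_assoc, Matrix.mul_assoc]
        rw [h1, Matrix.mulVec_zero, sub_zero] at this
        rw [← this, h2]
      have := Matrix.mulVec_injective_iff_isUnit.mpr hAinv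
      have h0 : A *ᵥ y = A *ᵥ 0 := by rw [hAy, Matrix.mulVec_zero]
      exact this h0
    set c := (Xᵀ * A) *ᵥ x with hc
    set b := B *ᵥ x with hbdef
    have hdot : dotProduct (star x) ((ρ⁻¹ • (A * X * Xᵀ * A) + B * B) *ᵥ x)
        = ρ⁻¹ * dotProduct c c + dotProduct b b := by
      rw [Matrix.add_mulVec, dotProduct_add, Matrix.smul_mulVec,
        dotProduct_smul, hfact, hBB]
      have e1 : dotProduct (star x) (((Xᵀ * A)ᵀ * (Xᵀ * A)) *ᵥ x) = dotProduct c c := by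
        rw [← Matrix.mulVec_mulVec, dotProduct_mulVec, vecMul_transpose]
        simp [hc]
      have e2 : dotProduct (star x) ((Bᵀ * B) *ᵥ x) = dotProduct b b := by
        rw [← Matrix.mulVec_mulVec, dotProduct_mulVec, vecMul_transpose]
        simp [hbdef]
      rw [e1, e2]
      simp
    rw [hdot]
    have hc0 : 0 ≤ dotProduct c c := by simpa using dotProduct_self_star_nonneg c
    have hb0 : 0 ≤ dotProduct b b := by simpa using dotProduct_self_star_nonneg b
    rcases eq_or_lt_of_le hb0 with hbz | hbpos
    · rcases eq_or_lt_of_le hc0 with hcz | hcpos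
      · exfalso
        exact hx (key x (dotProduct_self_eq_zero.mp hcz.symm)
          (dotProduct_self_eq_zero.mp hbz.symm))
      · have : 0 < ρ⁻¹ * dotProduct c c := mul_pos (inv_pos.mpr hρ) hcpos
        linarith
    · have : 0 ≤ ρ⁻¹ * dotProduct c c := mul_nonneg (le_of_lt (inv_pos.mpr hρ)) hc0
      linarith
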